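/- Let k be an algebraically closed field of characteristic not 2 and let q1, q2 be quadratic forms in 5 variables over k whose common zero locus X ⊂ P^4 is a smooth surface. Then for every [λ:μ] ∈ P^1(k) with det(λ·M1 + μ·M2) = 0, the matrix λ·M1 + μ·M2 has rank exactly 4; equivalently, the quadric λ·q1 + μ·q2 = 0 has a unique singular point. -/

import Mathlib

open Matrix

lemma aux_iso {k : Type*} [Field k] [IsAlgClosed k] (h2 : (2 : k) ≠ 0)
    (N : Matrix (Fin 5) (Fin 5) k) (u v : Fin 5 → k) :
    ∃ s t : k, ¬(s = 0 ∧ t = 0) ∧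
      (s • u + t • v) ⬝ᵥ N.mulVec (s • u + t • v) = 0 := by
  obtain ⟨a, ha⟩ : ∃ x, x = u ⬝ᵥ N.mulVec u := ⟨_, rfl⟩
  obtain ⟨b₁, hb₁⟩ : ∃ x, x = u ⬝ᵥ N.mulVec v := ⟨_, rfl⟩
  obtain ⟨b₂, hb₂⟩ : ∃ x, x = v ⬝ᵥ N.mulVec u := ⟨_, rfl⟩
  obtain ⟨c, hcv⟩ : ∃ x, x = v ⬝ᵥ N.mulVec v := ⟨_, rfl⟩
  have key : ∀ s t : k, (s • u + t • v) ⬝ᵥ N.mulVec (s • u + t • v)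
      = s * s * a + s * t * (b₁ + b₂) + t * t * c := by
    intro s t
    simp only [ha, hb₁, hb₂, hcv, Matrix.mulVec_add, Matrix.mulVec_smul, dotProduct_add,
      add_dotProduct, dotProduct_smul, smul_dotProduct, smul_eq_mul]
    ring
  by_cases haz : a = 0
  · exact ⟨1, 0, by simp, by rw [key]; simp [haz]⟩
  by_cases hcz : c = 0
  · exact ⟨0, 1, by simp, by rw [key]; simp [hcz]⟩
  · obtain ⟨r, hr⟩ := IsAlgClosed.exists_pow_nat_eq ((b₁ + b₂) ^ 2 - 4 * a * c) (n := 2)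
      zero_lt_two
    refine ⟨1, (-(b₁ + b₂) + r) / (2 * c), by simp, ?_⟩
    rw [key]
    have h2c : (2 : k) * c ≠ 0 := mul_ne_zero h2 hcz
    field_simp
    linear_combination hr

/-- Over an algebraically closed field of characteristic not 2, if `X = {q₁ = q₂ = 0} ⊂ P⁴`
is a smooth surface, then every singular member of the pencil of quadrics has Gram matrix of
rank exactly 4; equivalently, the quadric `λ q₁ + μ q₂ = 0` has a unique singular point. -/
theorem stmt1 {k : Type*} [Field k] [IsAlgClosed k] (h2 : (2 : k) ≠ 0)
    (M1 M2 : Matrix (Fin 5) (Fin 5) k) (hs1 : M1.IsSymm) (hs2 : M2.IsSymm)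
    (hsmooth : ∀ x : Fin 5 → k, x ≠ 0 → x ⬝ᵥ M1.mulVec x = 0 → x ⬝ᵥ M2.mulVec x = 0 →
      LinearIndependent k ![M1.mulVec x, M2.mulVec x]) :
    ∀ lam mu : k, ¬(lam = 0 ∧ mu = 0) → (lam • M1 + mu • M2).det = 0 →
      (lam • M1 + mu • M2).rank = 4 ∧
      ∃! P : Projectivization k (Fin 5 → k), (lam • M1 + mu • M2).mulVec P.rep = 0 := by
  intro lam mu hlm hdet
  set M : Matrix (Fin 5) (Fin 5) k := lam • M1 + mu • M2 with hM
  obtain ⟨v₀, hv₀ne, hv₀⟩ : ∃ v ≠ 0, M.mulVec v = 0 :=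
    (Matrix.exists_mulVec_eq_zero_iff).mpr hdet
  -- no nonzero kernel vector of `M` can lie on `X`
  have hker : ∀ x : Fin 5 → k, x ≠ 0 → M.mulVec x = 0 →
      ¬(x ⬝ᵥ M1.mulVec x = 0 ∧ x ⬝ᵥ M2.mulVec x = 0) := by
    rintro x hx hxk ⟨h1, h2'⟩
    have hLI := hsmooth x hx h1 h2'
    have := (Fintype.linearIndependent_iff.mp hLI) ![lam, mu] ?_
    · exact hlm ⟨this 0, this 1⟩
    · have : lam • M1.mulVec x + mu • M2.mulVec x = 0 := by
        rw [← hxk, hM]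
        simp [Matrix.add_mulVec, Matrix.smul_mulVec]
      simpa [Fin.sum_univ_two] using this
  -- any quadratic form vanishes identically... rather: the key claim
  have key : ∀ w : Fin 5 → k, M.mulVec w = 0 → w ∈ Submodule.span k {v₀} := by
    intro w hw
    by_contra hns
    -- choose the right quadric depending on which of lam, mu is nonzero
    have main : ∀ N : Matrix (Fin 5) (Fin 5) k,
        (∀ x : Fin 5 → k, x ≠ 0 → M.mulVec x = 0 → x ⬝ᵥ N.mulVec x = 0 → False) → False := by
      intro N hN
      obtain ⟨s, t, hst, hval⟩ := aux_iso h2 N v₀ w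
      set x : Fin 5 → k := s • v₀ + t • w with hx
      have hxk : M.mulVec x = 0 := by
        rw [hx]
        simp [Matrix.mulVec_add, Matrix.mulVec_smul, hv₀, hw]
      have hxne : x ≠ 0 := by
        intro h0
        by_cases ht : t = 0
        · have hs : s ≠ 0 := fun h => hst ⟨h, ht⟩
          rw [hx, ht, zero_smul, add_zero] at h0
          exact hv₀ne (by simpa [hs] using smul_eq_zero.mp h0)
        · apply hns
          rw [Submodule.mem_span_singleton]
          refine ⟨-s / t, ?_⟩
          have h1 : t • w = (-s) • v₀ := by
            rw [hx] at h0
            linear_combination (norm := module) h0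
          have h3 : w = (t⁻¹ * (-s)) • v₀ := by
            calc w = t⁻¹ • (t • w) := by rw [smul_smul, inv_mul_cancel₀ ht, one_smul]
            _ = (t⁻¹ * (-s)) • v₀ := by rw [h1, smul_smul]
          have h4 : -s / t = t⁻¹ * (-s) := by ring
          rw [h4, h3]
      exact hN x hxne hxk hval
    by_cases hlam : lam = 0
    · have hmu : mu ≠ 0 := fun h => hlm ⟨hlam, h⟩
      apply main M1
      intro x hx hxk h1
      refine hker x hx hxk ⟨h1, ?_⟩
      have hq : x ⬝ᵥ M.mulVec x = 0 := by rw [hxk]; simp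
      rw [hM] at hq
      simp only [Matrix.add_mulVec, Matrix.smul_mulVec, dotProduct_add,
        dotProduct_smul, smul_eq_mul, hlam, zero_mul, h1, mul_zero, zero_add] at hq
      exact (mul_eq_zero.mp hq).resolve_left hmu
    · apply main M2
      intro x hx hxk h2'
      refine hker x hx hxk ⟨?_, h2'⟩
      have hq : x ⬝ᵥ M.mulVec x = 0 := by rw [hxk]; simp
      rw [hM] at hq
      simp only [Matrix.add_mulVec, Matrix.smul_mulVec, dotProduct_add,
        dotProduct_smul, smul_eq_mul, h2', mul_zero, add_zero] at hq
      exact (mul_eq_zero.mp hq).resolve_left hlam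
  -- the kernel is exactly the span of v₀
  have hkereq : LinearMap.ker M.mulVecLin = Submodule.span k {v₀} := by
    apply le_antisymm
    · intro w hw
      exact key w (by simpa using hw)
    · rw [Submodule.span_le]
      rintro y rfl
      simpa using hv₀
  constructor
  · -- rank
    have hrn := LinearMap.finrank_range_add_finrank_ker M.mulVecLin
    rw [hkereq, finrank_span_singleton hv₀ne] at hrn
    have h5 : Module.finrank k (Fin 5 → k) = 5 := by simp
    rw [h5] at hrn
    have : Matrix.rank M = Module.finrank k (LinearMap.range M.mulVecLin) := rfl
    omega
  · -- unique singular point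
    refine ⟨Projectivization.mk k v₀ hv₀ne, ?_, ?_⟩
    · obtain ⟨a, ha⟩ := Projectivization.exists_smul_eq_mk_rep k v₀ hv₀ne
      rw [← ha]
      rw [Units.smul_def, Matrix.mulVec_smul, hv₀, smul_zero]
    · intro Q hQ
      have := key Q.rep hQ
      rw [Submodule.mem_span_singleton] at this
      obtain ⟨c, hc⟩ := this
      have hcne : c ≠ 0 := by
        rintro rfl
        exact Q.rep_nonzero (by rw [← hc, zero_smul])
      rw [← Q.mk_rep]
      rw [Projectivization.mk_eq_mk_iff' k _ _ Q.rep_nonzero hv₀ne]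
      exact ⟨c, hc⟩
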